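/- For the standard Gompertz function x(t) = exp(-exp(-t)), and each n ≥ 1, the n-th derivative equals (-1)^n * x(t) * Σ_{k=1}^{n} S(n,k) * (log x(t))^k, where S(n,k) is the Stirling number of the second kind. -/

import Mathlib

open Finset

/-- Stirling numbers of the second kind. -/
def stirlingSecond : ℕ → ℕ → ℕ
  | 0, 0 => 1
  | 0, _ + 1 => 0
  | _ + 1, 0 => 0
  | n + 1, k + 1 => (k + 1) * stirlingSecond n (k + 1) + stirlingSecond n k

lemma stirling_gt : ∀ n k : ℕ, n < k → stirlingSecond n k = 0
  | 0, _+1, _ => rfl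
  | n+1, k+1, h => by
      simp [stirlingSecond, stirling_gt n (k+1) (by omega), stirling_gt n k (by omega)]

lemma stirling_zero (n : ℕ) (hn : 1 ≤ n) : stirlingSecond n 0 = 0 := by
  cases n with
  | zero => omega
  | succ m => rfl

lemma hE (t : ℝ) : HasDerivAt (fun t : ℝ => Real.exp (-t)) (-Real.exp (-t)) t := by
  have h := (Real.hasDerivAt_exp (-t)).comp t ((hasDerivAt_id t).neg)
  simpa [Function.comp_def] using h

lemma hX (t : ℝ) : HasDerivAt (fun t : ℝ => Real.exp (-Real.exp (-t)))
    (Real.exp (-Real.exp (-t)) * Real.exp (-t)) t := by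
  have h := (Real.hasDerivAt_exp (-Real.exp (-t))).comp t (hE t).neg
  simpa [Function.comp_def] using h

lemma hTerm (i : ℕ) (t : ℝ) :
    HasDerivAt (fun t : ℝ => Real.exp (-Real.exp (-t)) * Real.exp (-t) ^ (i+1))
      (Real.exp (-Real.exp (-t)) * Real.exp (-t) ^ (i+2)
        - (i+1 : ℝ) * (Real.exp (-Real.exp (-t)) * Real.exp (-t) ^ (i+1))) t := by
  have h : HasDerivAt (fun t : ℝ => Real.exp (-Real.exp (-t)) * Real.exp (-t) ^ (i+1)) _ t :=
    (hX t).mul ((hE t).fun_pow (i+1))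
  convert h using 1
  simp only [Nat.add_sub_cancel]
  push_cast
  ring

lemma sum_id (n : ℕ) (hn : 1 ≤ n) (X u : ℝ) :
    ∑ i ∈ range n, (stirlingSecond n (i+1) : ℝ) * (-1)^(n+i+1) *
        (X * u^(i+2) - (i+1 : ℝ) * (X * u^(i+1)))
      = X * ∑ i ∈ range (n+1), (stirlingSecond (n+1) (i+1) : ℝ) * (-1)^(n+i+2) * u^(i+1) := by
  have hrec : ∀ i : ℕ, (stirlingSecond (n+1) (i+1) : ℝ)
      = (i+1 : ℝ) * stirlingSecond n (i+1) + stirlingSecond n i := by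
    intro i; simp [stirlingSecond]
  rw [Finset.mul_sum]
  have hsplit : ∀ i : ℕ, X * ((stirlingSecond (n+1) (i+1) : ℝ) * (-1)^(n+i+2) * u^(i+1))
      = (i+1 : ℝ) * (stirlingSecond n (i+1) : ℝ) * (-1)^(n+i+2) * (X * u^(i+1))
        + (stirlingSecond n i : ℝ) * (-1)^(n+i+2) * (X * u^(i+1)) := by
    intro i; rw [hrec i]; ring
  rw [Finset.sum_congr rfl (fun i _ => hsplit i), Finset.sum_add_distrib]
  rw [Finset.sum_range_succ, stirling_gt n (n+1) (by omega)]
  rw [Finset.sum_range_succ', stirling_zero n hn]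
  simp only [Nat.cast_zero, zero_mul, mul_zero, add_zero, zero_mul, mul_zero]
  rw [Finset.sum_congr rfl (fun (i : ℕ) _ =>
    show (stirlingSecond n (i+1) : ℝ) * (-1)^(n+i+1) * (X * u^(i+2) - (i+1 : ℝ) * (X * u^(i+1)))
      = (stirlingSecond n (i+1) : ℝ) * (-1)^(n+(i+1)+2) * (X * u^(i+1+1))
        + (i+1 : ℝ) * (stirlingSecond n (i+1) : ℝ) * (-1)^(n+i+2) * (X * u^(i+1)) from by ring)]
  rw [Finset.sum_add_distrib]
  ring

noncomputable def G (n : ℕ) (t : ℝ) : ℝ :=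
  Real.exp (-Real.exp (-t)) *
    ∑ i ∈ range n, (stirlingSecond n (i+1) : ℝ) * (-1)^(n+i+1) * Real.exp (-t) ^ (i+1)

lemma G_deriv (n : ℕ) (hn : 1 ≤ n) (t : ℝ) : HasDerivAt (G n) (G (n+1) t) t := by
  have key : HasDerivAt (fun t => ∑ i ∈ range n,
      (stirlingSecond n (i+1) : ℝ) * (-1)^(n+i+1) *
        (Real.exp (-Real.exp (-t)) * Real.exp (-t) ^ (i+1)))
      (∑ i ∈ range n, (stirlingSecond n (i+1) : ℝ) * (-1)^(n+i+1) *
        (Real.exp (-Real.exp (-t)) * Real.exp (-t) ^ (i+2)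
          - (i+1 : ℝ) * (Real.exp (-Real.exp (-t)) * Real.exp (-t) ^ (i+1)))) t :=
    HasDerivAt.fun_sum (fun i _ => (hTerm i t).const_mul _)
  have heq : G n = fun t => ∑ i ∈ range n,
      (stirlingSecond n (i+1) : ℝ) * (-1)^(n+i+1) *
        (Real.exp (-Real.exp (-t)) * Real.exp (-t) ^ (i+1)) := by
    funext s
    rw [G, Finset.mul_sum]
    exact Finset.sum_congr rfl (fun i _ => by ring)
  have hG : G (n+1) t = Real.exp (-Real.exp (-t)) *
      ∑ i ∈ range (n+1), (stirlingSecond (n+1) (i+1) : ℝ) * (-1)^(n+i+2) * Real.exp (-t) ^ (i+1) := by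
    rw [G]
    congr 1
    exact Finset.sum_congr rfl (fun i _ => by ring_nf)
  rw [heq, hG, ← sum_id n hn (Real.exp (-Real.exp (-t))) (Real.exp (-t))]
  exact key

lemma main_lemma : ∀ n : ℕ, 1 ≤ n →
    iteratedDeriv n (fun t : ℝ => Real.exp (-Real.exp (-t))) = G n := by
  intro n hn
  induction n with
  | zero => omega
  | succ m ih =>
    rcases Nat.eq_or_lt_of_le hn with h1 | h1
    · -- m + 1 = 1
      have hm : m = 0 := by omega
      subst hm
      rw [iteratedDeriv_one]
      funext t
      rw [(hX t).deriv, G]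
      simp [stirlingSecond]
    · have hm : 1 ≤ m := by omega
      rw [iteratedDeriv_succ, ih hm]
      funext t
      exact (G_deriv m hm t).deriv

theorem standard_gompertz_nth_derivative
    (x : ℝ → ℝ) (hxdef : ∀ t, x t = Real.exp (-Real.exp (-t))) :
    ∀ n : ℕ, 1 ≤ n → ∀ t : ℝ,
      iteratedDeriv n x t =
        (-1 : ℝ) ^ n * x t * ∑ k ∈ Finset.Icc 1 n,
          (stirlingSecond n k : ℝ) * Real.log (x t) ^ k := by
  have hfun : x = fun t => Real.exp (-Real.exp (-t)) := funext hxdef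
  subst hfun
  intro n hn t
  rw [main_lemma n hn]
  simp only [Real.log_exp]
  have hIcc : ∑ k ∈ Finset.Icc 1 n, (stirlingSecond n k : ℝ) * (-Real.exp (-t)) ^ k
      = ∑ i ∈ range n, (stirlingSecond n (1+i) : ℝ) * (-Real.exp (-t)) ^ (1+i) := by
    rw [← Finset.Ico_add_one_right_eq_Icc, Finset.sum_Ico_eq_sum_range]
    simp
  rw [hIcc, G, Finset.mul_sum, Finset.mul_sum]
  refine Finset.sum_congr rfl fun i _ => ?_
  rw [Nat.add_comm 1 i, neg_pow]
  ring
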